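/- arXiv:2205.14798 — 6 statements merged into one kernel-verified Lean document; each statement's English description precedes it below -/
import Mathlib

section
/- No deterministic strategyproof facility location mechanism on [0,1] for any number n ≥ 2 of agents satisfies Strong Proportionality: there is no f : [0,1]^n → [0,1] that is strategyproof and such that whenever all agents are located at at most two distinct points, f outputs the average of the reported locations. -/
/-- For any n ≥ 2, no deterministic strategyproof mechanism on [0,1]
satisfies Strong Proportionality (outputting the average whenever the profile
takes at most two distinct values). -/
theorem no_deterministic_SP_strong_proportional (n : ℕ) (hn : 2 ≤ n) :
    ¬ ∃ f : (Fin n → ℝ) → ℝ,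
      (∀ x : Fin n → ℝ, (∀ i, x i ∈ Set.Icc (0:ℝ) 1) → f x ∈ Set.Icc (0:ℝ) 1) ∧
      (∀ (x : Fin n → ℝ) (i : Fin n) (x' : ℝ),
        (∀ j, x j ∈ Set.Icc (0:ℝ) 1) → x' ∈ Set.Icc (0:ℝ) 1 →
        |x i - f x| ≤ |x i - f (Function.update x i x')|) ∧
      (∀ x : Fin n → ℝ, (∀ i, x i ∈ Set.Icc (0:ℝ) 1) →
        (∃ α β : ℝ, ∀ i, x i = α ∨ x i = β) →
        f x = (∑ i, x i) / n) := by
  rintro ⟨f, _hrange, hSP, hprop⟩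
  have hn2 : (2:ℝ) ≤ (n:ℝ) := by exact_mod_cast hn
  have hnpos : (0:ℝ) < (n:ℝ) := by linarith
  set i0 : Fin n := ⟨0, by omega⟩ with hi0
  set a : ℝ := ((n:ℝ) - 1) / n with ha
  have ha0 : 0 ≤ a := by
    apply div_nonneg _ hnpos.le; linarith
  have ha1 : a ≤ 1 := by
    rw [ha, div_le_one hnpos]; linarith
  set x : Fin n → ℝ := fun i => if i = i0 then a else 1 with hx
  have hmem : ∀ i, x i ∈ Set.Icc (0:ℝ) 1 := by
    intro i
    by_cases h : i = i0 <;> simp [hx, h, ha0, ha1]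
  have hsum : ∑ i, x i = a + ((n:ℝ) - 1) := by
    have hrw : ∀ i, x i = (if i = i0 then a - 1 else 0) + 1 := by
      intro i; by_cases h : i = i0 <;> simp [hx, h]
    simp_rw [hrw]
    rw [Finset.sum_add_distrib, Finset.sum_ite_eq' Finset.univ i0]
    simp
    ring
  have hfx : f x = (a + ((n:ℝ) - 1)) / n := by
    rw [hprop x hmem ⟨a, 1, fun i => by by_cases h : i = i0 <;> simp [hx, h]⟩, hsum]
  set y : Fin n → ℝ := Function.update x i0 0 with hy
  have hyeq : ∀ i, y i = if i = i0 then 0 else 1 := by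
    intro i
    by_cases h : i = i0 <;> simp [hy, hx, h, Function.update]
  have hymem : ∀ i, y i ∈ Set.Icc (0:ℝ) 1 := by
    intro i; rw [hyeq i]; by_cases h : i = i0 <;> simp [h]
  have hysum : ∑ i, y i = (n:ℝ) - 1 := by
    have hrw : ∀ i, y i = (if i = i0 then (-1:ℝ) else 0) + 1 := by
      intro i; rw [hyeq i]; by_cases h : i = i0 <;> simp [h]
    simp_rw [hrw]
    rw [Finset.sum_add_distrib, Finset.sum_ite_eq' Finset.univ i0]
    simp
    ring
  have hfy : f y = a := by
    rw [hprop y hymem ⟨0, 1, fun i => by rw [hyeq i]; by_cases h : i = i0 <;> simp [h]⟩,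
      hysum, ha]
  have hsp := hSP x i0 0 hmem (by simp)
  rw [← hy, hfy, hfx] at hsp
  have hxi0 : x i0 = a := by simp [hx]
  rw [hxi0] at hsp
  simp only [sub_self, abs_zero] at hsp
  have heq : a = (a + ((n:ℝ) - 1)) / n := by
    have := abs_nonneg (a - (a + ((n:ℝ) - 1)) / n)
    have h0 : |a - (a + ((n:ℝ) - 1)) / n| = 0 := le_antisymm hsp this
    have := abs_eq_zero.mp h0
    linarith
  rw [ha] at heq
  field_simp at heq
  nlinarith [heq]
end

section
/- Strong Proportionality is equivalent to averaging on two-valued profiles: a mechanism f : [0,1]^n → [0,1] satisfies Strong Proportionality (for every profile x ∈ {α,β}^n with 0 ≤ α < β ≤ 1 and every set S of agents at a common location, d(x_i,f(x)) ≤ ((n−|S|)/n)(β−α) for all i ∈ S) if and only if for every such two-valued profile x, f(x) equals the arithmetic mean (1/n)·Σ_i x_i. -/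
open Finset in
lemma two_valued_facts {n : ℕ} {α β : ℝ} (hne : α ≠ β) (x : Fin n → ℝ)
    (hx : ∀ i, x i = α ∨ x i = β) :
    (Finset.univ.filter (fun i => x i = α)).card
      + (Finset.univ.filter (fun i => x i = β)).card = n ∧
    ∑ i, x i = ((Finset.univ.filter (fun i => x i = α)).card : ℝ) * α
      + ((Finset.univ.filter (fun i => x i = β)).card : ℝ) * β := by
  classical
  set A := Finset.univ.filter (fun i => x i = α) with hA
  set B := Finset.univ.filter (fun i => x i = β) with hB
  have hdisj : Disjoint A B := by
    rw [Finset.disjoint_left]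
    intro i hiA hiB
    rw [hA, Finset.mem_filter] at hiA
    rw [hB, Finset.mem_filter] at hiB
    exact hne (hiA.2 ▸ hiB.2)
  have hunion : A ∪ B = Finset.univ := by
    ext i
    simp only [hA, hB, Finset.mem_union, Finset.mem_filter, Finset.mem_univ,
      true_and, iff_true]
    exact hx i
  have hcard : A.card + B.card = n := by
    have h := Finset.card_union_of_disjoint hdisj
    rw [hunion, Finset.card_univ, Fintype.card_fin] at h
    omega
  refine ⟨hcard, ?_⟩
  have sA : ∑ i ∈ A, x i = (A.card : ℝ) * α := by
    rw [Finset.sum_congr rfl (fun i hi => (Finset.mem_filter.mp hi).2),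
      Finset.sum_const, nsmul_eq_mul]
  have sB : ∑ i ∈ B, x i = (B.card : ℝ) * β := by
    rw [Finset.sum_congr rfl (fun i hi => (Finset.mem_filter.mp hi).2),
      Finset.sum_const, nsmul_eq_mul]
  rw [← hunion, Finset.sum_union hdisj, sA, sB]

set_option maxHeartbeats 1000000 in
/-- Strong Proportionality is equivalent to averaging on two-valued
profiles. -/
theorem strong_proportionality_iff_average (n : ℕ) (hn : 2 ≤ n)
    (f : (Fin n → ℝ) → ℝ) :
    (∀ α β : ℝ, 0 ≤ α → α < β → β ≤ 1 →
      ∀ x : Fin n → ℝ, (∀ i, x i = α ∨ x i = β) →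
      ∀ S : Finset (Fin n), (∀ i ∈ S, ∀ j ∈ S, x i = x j) →
      ∀ i ∈ S, |x i - f x| ≤ (((n : ℝ) - S.card) / n) * (β - α))
    ↔
    (∀ α β : ℝ, 0 ≤ α → α < β → β ≤ 1 →
      ∀ x : Fin n → ℝ, (∀ i, x i = α ∨ x i = β) →
      f x = (∑ i, x i) / n) := by
  classical
  have hn0 : (0 : ℝ) < n := by
    have : 0 < n := lt_of_lt_of_le two_pos hn
    exact_mod_cast this
  constructor
  · -- Strong Proportionality → averaging
    intro H α β hα hαβ hβ x hx
    obtain ⟨hcard, hsum⟩ := two_valued_facts (ne_of_lt hαβ) x hx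
    set A := Finset.univ.filter (fun i => x i = α) with hA
    set B := Finset.univ.filter (fun i => x i = β) with hB
    set a : ℝ := (A.card : ℝ) with ha
    set b : ℝ := (B.card : ℝ) with hb
    have hab : a + b = n := by rw [ha, hb]; exact_mod_cast hcard
    have key1 : α * (n : ℝ) = α * a + α * b := by rw [← hab]; ring
    have key2 : β * (n : ℝ) = β * a + β * b := by rw [← hab]; ring
    have commA : ∀ i ∈ A, ∀ j ∈ A, x i = x j := by
      intro i hi j hj
      rw [(Finset.mem_filter.mp hi).2, (Finset.mem_filter.mp hj).2]
    have commB : ∀ i ∈ B, ∀ j ∈ B, x i = x j := by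
      intro i hi j hj
      rw [(Finset.mem_filter.mp hi).2, (Finset.mem_filter.mp hj).2]
    rw [hsum, eq_div_iff (ne_of_gt hn0)]
    -- goal : f x * n = a * α + b * β
    by_cases hAe : A.Nonempty
    · by_cases hBe : B.Nonempty
      · obtain ⟨i, hiA⟩ := hAe
        obtain ⟨j, hjB⟩ := hBe
        have h1 := H α β hα hαβ hβ x hx A commA i hiA
        have h2 := H α β hα hαβ hβ x hx B commB j hjB
        rw [(Finset.mem_filter.mp hiA).2, div_mul_eq_mul_div, abs_le] at h1
        rw [(Finset.mem_filter.mp hjB).2, div_mul_eq_mul_div, abs_le] at h2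
        have m1 : -(((n : ℝ) - a) * (β - α)) ≤ (α - f x) * n := by
          rw [← neg_div] at h1
          exact (div_le_iff₀ hn0).mp h1.1
        have m2 : (β - f x) * n ≤ ((n : ℝ) - b) * (β - α) :=
          (le_div_iff₀ hn0).mp h2.2
        linarith [m1, m2, key1, key2]
      · -- B empty: all values equal α
        have hB0 : B.card = 0 := by
          rw [Finset.not_nonempty_iff_eq_empty.mp hBe, Finset.card_empty]
        have hb0 : b = 0 := by rw [hb, hB0]; simp
        obtain ⟨i, hiA⟩ : A.Nonempty := by
          rw [← Finset.card_pos]; omega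
        have h1 := H α β hα hαβ hβ x hx A commA i hiA
        rw [(Finset.mem_filter.mp hiA).2, div_mul_eq_mul_div, abs_le] at h1
        have hna : (n : ℝ) - a = 0 := by linarith
        rw [hna, zero_mul] at h1
        have m1 : -(0 / (n:ℝ)) ≤ α - f x := h1.1
        have m2 : α - f x ≤ 0 / (n:ℝ) := h1.2
        rw [zero_div] at m1 m2
        have hfα : f x = α := by rw [neg_zero] at m1; linarith
        have z1 : α * b = b * α := by ring
        have z2 : b * β - b * α = 0 := by
          rw [hb0]; ring
        rw [hfα]
        have : b * β = b * α := by linarith [z2]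
        linarith [key1, this]
    · -- A empty: all values equal β
      have hA0 : A.card = 0 := by
        rw [Finset.not_nonempty_iff_eq_empty.mp hAe, Finset.card_empty]
      have ha0 : a = 0 := by rw [ha, hA0]; simp
      obtain ⟨j, hjB⟩ : B.Nonempty := by
        rw [← Finset.card_pos]; omega
      have h2 := H α β hα hαβ hβ x hx B commB j hjB
      rw [(Finset.mem_filter.mp hjB).2, div_mul_eq_mul_div, abs_le] at h2
      have hnb : (n : ℝ) - b = 0 := by linarith
      rw [hnb, zero_mul, zero_div] at h2
      have hfβ : f x = β := by
        have m1 := h2.1; have m2 := h2.2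
        rw [neg_zero] at m1; linarith
      have z1 : a * α = 0 := by rw [ha0]; ring
      have z2 : β * a = 0 := by rw [ha0]; ring
      rw [hfβ, z1]
      linarith [key2, z2]
  · -- averaging → Strong Proportionality
    intro H α β hα hαβ hβ x hx S hS i hiS
    have hfx := H α β hα hαβ hβ x hx
    obtain ⟨hcard, hsum⟩ := two_valued_facts (ne_of_lt hαβ) x hx
    set A := Finset.univ.filter (fun i => x i = α) with hA
    set B := Finset.univ.filter (fun i => x i = β) with hB
    set a : ℝ := (A.card : ℝ) with ha
    set b : ℝ := (B.card : ℝ) with hb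
    have hab : a + b = n := by rw [ha, hb]; exact_mod_cast hcard
    rw [hfx, hsum]
    rcases hx i with hxi | hxi
    · -- x i = α : S ⊆ A
      have hSA : S ⊆ A := by
        intro j hj
        rw [hA, Finset.mem_filter]
        exact ⟨Finset.mem_univ j, (hS j hj i hiS).trans hxi⟩
      have hsleq : (S.card : ℝ) ≤ a := by
        rw [ha]; exact_mod_cast Finset.card_le_card hSA
      have heq : x i - (a * α + b * β) / n = -(b * (β - α) / n) := by
        rw [hxi]
        field_simp
        linear_combination (-α) * hab
      have hb0 : (0:ℝ) ≤ b := by rw [hb]; positivity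
      rw [heq, abs_neg,
        abs_of_nonneg (div_nonneg (mul_nonneg hb0 (by linarith)) hn0.le),
        div_mul_eq_mul_div]
      gcongr <;> linarith
    · -- x i = β : S ⊆ B
      have hSB : S ⊆ B := by
        intro j hj
        rw [hB, Finset.mem_filter]
        exact ⟨Finset.mem_univ j, (hS j hj i hiS).trans hxi⟩
      have hsleq : (S.card : ℝ) ≤ b := by
        rw [hb]; exact_mod_cast Finset.card_le_card hSB
      have heq : x i - (a * α + b * β) / n = a * (β - α) / n := by
        rw [hxi]
        field_simp
        linear_combination (-β) * hab
      have ha0 : (0:ℝ) ≤ a := by rw [ha]; positivity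
      rw [heq,
        abs_of_nonneg (div_nonneg (mul_nonneg ha0 (by linarith)) hn0.le),
        div_mul_eq_mul_div]
      gcongr <;> linarith
end

section
/- The Random Rank mechanism satisfies Strong Proportionality in expectation: for any profile x ∈ {α,β}^n with 0 ≤ α < β ≤ 1 and any set S of agents at a common location, the expected distance from each agent in S to the facility, i.e., (1/n)·Σ_{k=1}^n |x_i − rank^k(x)|, is at most ((n−|S|)/n)(β−α) for all i ∈ S. -/
/-- `rankK n k x` is the k-th largest of the coordinates of `x`. -/
noncomputable def rankK (n k : ℕ) (x : Fin n → ℝ) : ℝ :=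
  ((List.ofFn x).insertionSort (· ≥ ·)).getD (k - 1) 0

private lemma sum_getD_eq (f : ℝ → ℝ) :
    ∀ (l : List ℝ), ∑ j ∈ Finset.range l.length, f (l.getD j 0) = (l.map f).sum
  | [] => by simp
  | a :: l => by
    rw [List.length_cons, Finset.sum_range_succ']
    simp only [List.getD_cons_succ, List.getD_cons_zero, List.map_cons, List.sum_cons]
    rw [sum_getD_eq f l]
    ring

/-- Random Rank satisfies Strong Proportionality in expectation. -/
theorem randomRank_strong_proportional_in_expectation (n : ℕ) (hn : 1 ≤ n)
    (α β : ℝ) (hα : 0 ≤ α) (hαβ : α < β) (hβ : β ≤ 1)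
    (x : Fin n → ℝ) (hx : ∀ i, x i = α ∨ x i = β)
    (S : Finset (Fin n)) (hS : ∀ i ∈ S, ∀ j ∈ S, x i = x j) :
    ∀ i ∈ S, (1 / (n : ℝ)) * ∑ k ∈ Finset.Icc 1 n, |x i - rankK n k x| ≤
      (((n : ℝ) - S.card) / n) * (β - α) := by
  intro i hi
  set l := (List.ofFn x).insertionSort (· ≥ ·) with hl
  have hlen : l.length = n := by simp [hl]
  have hperm : l.Perm (List.ofFn x) := List.perm_insertionSort _ _
  have hstep : ∑ k ∈ Finset.Icc 1 n, |x i - rankK n k x| = ∑ j : Fin n, |x i - x j| := by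
    have h1 : ∑ k ∈ Finset.Icc 1 n, |x i - rankK n k x|
        = ∑ j ∈ Finset.range n, |x i - l.getD j 0| := by
      rw [← Finset.Ico_add_one_right_eq_Icc, Finset.sum_Ico_eq_sum_range]
      apply Finset.sum_congr (by congr 1)
      intro j _
      simp [rankK, hl, Nat.add_sub_cancel_left]
    have h2 := sum_getD_eq (fun v => |x i - v|) l
    rw [hlen] at h2
    rw [h1, h2, (hperm.map (fun v => |x i - v|)).sum_eq, List.map_ofFn, List.sum_ofFn]
    rfl
  have hcard : S.card ≤ n := by simpa using Finset.card_le_univ S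
  have hbound : ∑ j : Fin n, |x i - x j| ≤ ((n : ℝ) - S.card) * (β - α) := by
    calc ∑ j : Fin n, |x i - x j|
        ≤ ∑ j : Fin n, (if j ∈ S then 0 else (β - α)) := by
          apply Finset.sum_le_sum
          intro j _
          by_cases hj : j ∈ S
          · simp [hj, hS i hi j hj]
          · simp only [hj, if_false]
            rw [abs_le]
            rcases hx i with h | h <;> rcases hx j with h' | h' <;>
              rw [h, h'] <;> constructor <;> linarith
      _ = ((n : ℝ) - S.card) * (β - α) := by
          rw [Finset.sum_ite, Finset.sum_const, Finset.sum_const]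
          have : (Finset.univ.filter (fun j => ¬ j ∈ S)).card = n - S.card := by
            simp [Finset.filter_not, Finset.card_sdiff_of_subset (Finset.subset_univ S)]
          rw [smul_zero, zero_add, this, nsmul_eq_mul, Nat.cast_sub hcard]
  have hn0 : (0 : ℝ) < n := by exact_mod_cast hn
  rw [hstep]
  have : (((n : ℝ) - S.card) / n) * (β - α) = (1 / (n : ℝ)) * (((n : ℝ) - S.card) * (β - α)) := by
    ring
  rw [this]
  exact mul_le_mul_of_nonneg_left hbound (by positivity)
end

section
/- Suppose a family of nonnegative real random variables Y_{(1)} ≤ … ≤ Y_{(n−1)} taking values in [0,1] arises as order statistics of phantoms of a mechanism satisfying Strong Proportionality in expectation, so that for each i ∈ {1,…,n−1} and all 0 ≤ α < β ≤ 1: Pr[Y_{(i)} ≤ α] ≤ (n−i)/n and Pr[Y_{(i)} ≥ β] ≤ i/n. Then Pr[Y_{(i)} = 1] = i/n and Pr[Y_{(i)} = 0] = (n−i)/n; in particular Y_{(i)} ∈ {0,1} almost surely. -/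
open MeasureTheory ENNReal

/-- If a [0,1]-valued random variable Y (the i-th order statistic of
the phantoms of a mechanism satisfying Strong Proportionality in expectation)
satisfies the tail bounds Pr[Y ≤ α] ≤ (n−i)/n and Pr[Y ≥ β] ≤ i/n for all
0 ≤ α < β ≤ 1, then Pr[Y = 1] = i/n and Pr[Y = 0] = (n−i)/n; in particular
Y ∈ {0,1} almost surely. -/
theorem phantom_order_statistic_two_point {Ω : Type*} [MeasurableSpace Ω]
    (μ : Measure Ω) [IsProbabilityMeasure μ] (n i : ℕ)
    (hi1 : 1 ≤ i) (hi2 : i ≤ n - 1)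
    (Y : Ω → ℝ) (hY : Measurable Y) (hrange : ∀ ω, Y ω ∈ Set.Icc (0:ℝ) 1)
    (htail : ∀ α β : ℝ, 0 ≤ α → α < β → β ≤ 1 →
      μ {ω | Y ω ≤ α} ≤ ((n - i : ℕ) : ℝ≥0∞) / n ∧
      μ {ω | β ≤ Y ω} ≤ (i : ℝ≥0∞) / n) :
    μ {ω | Y ω = 1} = (i : ℝ≥0∞) / n ∧
    μ {ω | Y ω = 0} = ((n - i : ℕ) : ℝ≥0∞) / n ∧
    μ {ω | Y ω = 0 ∨ Y ω = 1} = 1 := by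
  have hn : 2 ≤ n := by omega
  have hn0 : (n : ℝ≥0∞) ≠ 0 := by
    simp; omega
  have hnt : (n : ℝ≥0∞) ≠ ⊤ := by simp
  set a : ℝ≥0∞ := ((n - i : ℕ) : ℝ≥0∞) / n with ha
  set b : ℝ≥0∞ := (i : ℝ≥0∞) / n with hb
  have hab : a + b = 1 := by
    rw [ha, hb, ENNReal.div_add_div_same]
    rw [← Nat.cast_add, Nat.sub_add_cancel (by omega)]
    exact ENNReal.div_self hn0 hnt
  have hbt : b ≠ ⊤ := by
    rw [hb]; exact (ENNReal.div_lt_top (by simp) hn0).ne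
  have hat : a ≠ ⊤ := by
    rw [ha]; exact (ENNReal.div_lt_top (by simp) hn0).ne
  -- set equalities from range
  have hset1 : {ω | Y ω = 1} = {ω | (1:ℝ) ≤ Y ω} := by
    ext ω; have := (hrange ω).2; simp only [Set.mem_setOf_eq]; constructor
    · intro h; linarith
    · intro h; linarith
  have hset0 : {ω | Y ω = 0} = {ω | Y ω ≤ (0:ℝ)} := by
    ext ω; have := (hrange ω).1; simp only [Set.mem_setOf_eq]; constructor
    · intro h; linarith
    · intro h; linarith
  -- upper bounds
  have h1 : μ {ω | (1:ℝ) ≤ Y ω} ≤ b := (htail 0 1 le_rfl one_pos le_rfl).2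
  have h0 : μ {ω | Y ω ≤ (0:ℝ)} ≤ a := (htail 0 1 le_rfl one_pos le_rfl).1
  -- μ {Y < 1} ≤ a
  have hlt1set : {ω | Y ω < 1} = ⋃ k : ℕ, {ω | Y ω ≤ 1 - 1/(k+1)} := by
    ext ω; simp only [Set.mem_setOf_eq, Set.mem_iUnion]
    constructor
    · intro h
      obtain ⟨k, hk⟩ := exists_nat_one_div_lt (by linarith : (0:ℝ) < 1 - Y ω)
      exact ⟨k, by push_cast at hk ⊢; linarith⟩
    · rintro ⟨k, hk⟩
      have : (0:ℝ) < 1/(k+1) := by positivity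
      linarith
  have hmono1 : Monotone (fun k : ℕ => {ω | Y ω ≤ 1 - 1/(k+1)}) := by
    intro j k hjk ω hω
    simp only [Set.mem_setOf_eq] at *
    have : (1:ℝ)/(k+1) ≤ 1/(j+1) := by
      apply div_le_div_of_nonneg_left one_pos.le (by positivity)
      push_cast; linarith [(Nat.cast_le (α := ℝ)).mpr hjk]
    linarith
  have hlt1 : μ {ω | Y ω < 1} ≤ a := by
    rw [hlt1set, hmono1.directed_le.measure_iUnion]
    refine iSup_le fun k => ?_
    have hpos : (0:ℝ) < 1/(k+1) := by positivity
    have hle1 : (1:ℝ)/(k+1) ≤ 1 := by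
      rw [div_le_one (by positivity)]; push_cast; linarith [Nat.cast_nonneg (α := ℝ) k]
    exact (htail (1 - 1/(k+1)) 1 (by linarith) (by linarith) le_rfl).1
  -- μ {Y > 0} ≤ b
  have hgt0set : {ω | (0:ℝ) < Y ω} = ⋃ k : ℕ, {ω | (1:ℝ)/(k+1) ≤ Y ω} := by
    ext ω; simp only [Set.mem_setOf_eq, Set.mem_iUnion]
    constructor
    · intro h
      obtain ⟨k, hk⟩ := exists_nat_one_div_lt h
      exact ⟨k, by push_cast at hk ⊢; linarith⟩
    · rintro ⟨k, hk⟩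
      have : (0:ℝ) < 1/(k+1) := by positivity
      linarith
  have hmono0 : Monotone (fun k : ℕ => {ω | (1:ℝ)/(k+1) ≤ Y ω}) := by
    intro j k hjk ω hω
    simp only [Set.mem_setOf_eq] at *
    have : (1:ℝ)/(k+1) ≤ 1/(j+1) := by
      apply div_le_div_of_nonneg_left one_pos.le (by positivity)
      push_cast; linarith [(Nat.cast_le (α := ℝ)).mpr hjk]
    linarith
  have hgt0 : μ {ω | (0:ℝ) < Y ω} ≤ b := by
    rw [hgt0set, hmono0.directed_le.measure_iUnion]
    refine iSup_le fun k => ?_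
    have hpos : (0:ℝ) < 1/(k+1) := by positivity
    have hle1 : (1:ℝ)/(k+1) ≤ 1 := by
      rw [div_le_one (by positivity)]; push_cast; linarith [Nat.cast_nonneg (α := ℝ) k]
    exact (htail 0 (1/(k+1)) le_rfl hpos hle1).2
  -- totals
  have hm1 : MeasurableSet {ω | (1:ℝ) ≤ Y ω} := hY measurableSet_Ici
  have hm0 : MeasurableSet {ω | Y ω ≤ (0:ℝ)} := hY measurableSet_Iic
  have htot1 : μ {ω | Y ω < 1} + μ {ω | (1:ℝ) ≤ Y ω} = 1 := by
    have h := prob_add_prob_compl (μ := μ)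
      (hY measurableSet_Iio : MeasurableSet {ω | Y ω < 1})
    rw [show (Y ⁻¹' Set.Iio 1)ᶜ = {ω | (1:ℝ) ≤ Y ω} from by ext ω; simp [not_lt]] at h
    exact h
  have htot0 : μ {ω | Y ω ≤ (0:ℝ)} + μ {ω | (0:ℝ) < Y ω} = 1 := by
    have h := prob_add_prob_compl (μ := μ) hm0
    rw [show {ω | Y ω ≤ (0:ℝ)}ᶜ = {ω | (0:ℝ) < Y ω} from by ext ω; simp [not_le]] at h
    exact h
  -- force equalities
  have heq1 : μ {ω | (1:ℝ) ≤ Y ω} = b := by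
    refine le_antisymm h1 ?_
    have : μ {ω | (1:ℝ) ≤ Y ω} = 1 - μ {ω | Y ω < 1} := by
      rw [← htot1]; rw [ENNReal.add_sub_cancel_left (measure_ne_top μ _)]
    rw [this]
    calc b = 1 - a := by rw [← hab, add_comm, ENNReal.add_sub_cancel_right hat]
    _ ≤ 1 - μ {ω | Y ω < 1} := tsub_le_tsub_left hlt1 1
  have heq0 : μ {ω | Y ω ≤ (0:ℝ)} = a := by
    refine le_antisymm h0 ?_
    have : μ {ω | Y ω ≤ (0:ℝ)} = 1 - μ {ω | (0:ℝ) < Y ω} := by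
      rw [← htot0]; rw [ENNReal.add_sub_cancel_right (measure_ne_top μ _)]
    rw [this]
    calc a = 1 - b := by rw [← hab, ENNReal.add_sub_cancel_right hbt]
    _ ≤ 1 - μ {ω | (0:ℝ) < Y ω} := tsub_le_tsub_left hgt0 1
  refine ⟨by rw [hset1, heq1], by rw [hset0, heq0], ?_⟩
  have hunion : {ω | Y ω = 0 ∨ Y ω = 1} = {ω | Y ω = 0} ∪ {ω | Y ω = 1} := rfl
  rw [hunion, measure_union ?_ (by rw [hset1]; exact hm1)]
  · rw [hset0, hset1, heq0, heq1, hab]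
  · refine Set.disjoint_left.mpr ?_
    intro ω h0' h1'
    simp only [Set.mem_setOf_eq] at h0' h1'
    linarith
end

section
/- The AverageOrRandomRank-p mechanism is strategyproof in expectation if and only if p ∈ [0, 1/2]: for all agents i, profiles x ∈ [0,1]^n and misreports x_i', the truthful expected cost p·|x_i − avg(x)| + ((1−p)/n)·Σ_k |x_i − rank^k(x)| is at most p·|x_i − avg(x_i',x_{−i})| + ((1−p)/n)·Σ_k |x_i − rank^k(x_i',x_{−i})|; and for every p > 1/2 there exists a profile and misreport strictly decreasing some agent's expected cost. -/
lemma list_sum_getD (f : ℝ → ℝ) (l : List ℝ) :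
    ∑ k ∈ Finset.range l.length, f (l.getD k 0) = (l.map f).sum := by
  induction l with
  | nil => simp
  | cons a t ih =>
    rw [List.length_cons, Finset.sum_range_succ']
    simp only [List.getD_cons_succ, List.getD_cons_zero]
    rw [ih, List.map_cons, List.sum_cons, add_comm]

lemma sum_rank (n : ℕ) (c : ℝ) (x : Fin n → ℝ) :
    ∑ k ∈ Finset.Icc 1 n, |c - rankK n k x| = ∑ j, |c - x j| := by
  set l := (List.ofFn x).insertionSort (· ≥ ·) with hl
  have hlen : l.length = n := by simp [hl]
  have hperm : l.Perm (List.ofFn x) := List.perm_insertionSort _ _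
  have h1 : ∑ k ∈ Finset.Icc 1 n, |c - rankK n k x|
      = ∑ k ∈ Finset.range n, |c - l.getD k 0| := by
    rw [show Finset.Icc 1 n = Finset.Ico 1 (n+1) by rfl, Finset.sum_Ico_eq_sum_range]
    simp [rankK, hl]
  have h2 := list_sum_getD (fun a => |c - a|) l
  rw [hlen] at h2
  rw [h1, h2, (hperm.map (fun a => |c - a|)).sum_eq, List.map_ofFn, List.sum_ofFn]
  rfl

lemma sum_update_eq (n : ℕ) (g : ℝ → ℝ) (x : Fin n → ℝ) (i : Fin n) (b : ℝ) :
    ∑ j, g (Function.update x i b j) = ∑ j, g (x j) - g (x i) + g b := by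
  have h : (fun j => g (Function.update x i b j))
      = Function.update (fun j => g (x j)) i (g b) := by
    funext j
    rcases eq_or_ne j i with rfl | hj
    · simp
    · simp [Function.update_of_ne hj]
  rw [h, Finset.sum_update_of_mem (Finset.mem_univ i),
    ← Finset.sum_erase_add Finset.univ _ (Finset.mem_univ i),
    Finset.sdiff_singleton_eq_erase]
  ring

/-- AverageOrRandomRank-p is strategyproof in expectation if and
only if p ∈ [0, 1/2]. -/
theorem averageOrRandomRank_strategyproof_iff (n : ℕ) (hn : 2 ≤ n)
    (p : ℝ) (hp0 : 0 ≤ p) (hp1 : p ≤ 1) :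
    (∀ (x : Fin n → ℝ) (i : Fin n) (x' : ℝ),
      (∀ j, x j ∈ Set.Icc (0:ℝ) 1) → x' ∈ Set.Icc (0:ℝ) 1 →
      p * |x i - (∑ j, x j) / n| +
        ((1 - p) / n) * ∑ k ∈ Finset.Icc 1 n, |x i - rankK n k x| ≤
      p * |x i - (∑ j, Function.update x i x' j) / n| +
        ((1 - p) / n) *
          ∑ k ∈ Finset.Icc 1 n, |x i - rankK n k (Function.update x i x')|)
    ↔ p ≤ 1 / 2 := by
  have hN : (2:ℝ) ≤ n := by exact_mod_cast hn
  have hN0 : (0:ℝ) < n := by linarith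
  constructor
  · intro H
    set i : Fin n := ⟨0, by omega⟩
    set x : Fin n → ℝ := Function.update (fun _ => (1:ℝ)) i (1/2) with hxdef
    have hxi : x i = 1/2 := by simp [hxdef]
    have hxmem : ∀ j, x j ∈ Set.Icc (0:ℝ) 1 := by
      intro j
      rcases eq_or_ne j i with rfl | hj
      · simp [hxdef]; norm_num
      · simp [hxdef, Function.update_of_ne hj]
    have key := H x i 0 hxmem (by norm_num)
    have hsum : ∑ j, x j = n - 1/2 := by
      have := sum_update_eq n id (fun _ => (1:ℝ)) i (1/2)
      simp only [id] at this
      simp only [hxdef]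
      rw [this]
      simp only [Finset.sum_const, Finset.card_univ, Fintype.card_fin, nsmul_eq_mul, mul_one]
      ring
    have hupd : Function.update x i (0:ℝ) = Function.update (fun _ => (1:ℝ)) i 0 := by
      simp [hxdef, Function.update_idem]
    have hsum' : ∑ j, Function.update x i (0:ℝ) j = n - 1 := by
      rw [hupd]
      have := sum_update_eq n id (fun _ => (1:ℝ)) i 0
      simp only [id] at this
      rw [this]
      simp only [Finset.sum_const, Finset.card_univ, Fintype.card_fin, nsmul_eq_mul, mul_one]
      ring
    have habs : |(1:ℝ)/2 - 1| = 1/2 := by norm_num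
    have habs0 : |(1:ℝ)/2 - 0| = 1/2 := by norm_num
    have hrank1 : ∑ k ∈ Finset.Icc 1 n, |x i - rankK n k x| = (n - 1) / 2 := by
      rw [sum_rank, hxi]
      simp only [hxdef]
      rw [sum_update_eq n (fun t => |1/2 - t|) (fun _ => (1:ℝ)) i (1/2)]
      simp only [habs, sub_self, abs_zero, Finset.sum_const, Finset.card_univ,
        Fintype.card_fin, nsmul_eq_mul]
      ring
    have hrank2 : ∑ k ∈ Finset.Icc 1 n, |x i - rankK n k (Function.update x i 0)|
        = n / 2 := by
      rw [sum_rank, hxi, hupd]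
      rw [sum_update_eq n (fun t => |1/2 - t|) (fun _ => (1:ℝ)) i 0]
      simp only [habs, habs0, Finset.sum_const, Finset.card_univ,
        Fintype.card_fin, nsmul_eq_mul]
      ring
    rw [hsum, hsum', hrank1, hrank2, hxi] at key
    have habs1 : |1/2 - ((n:ℝ) - 1/2)/n| = ((n:ℝ) - 1)/(2*n) := by
      rw [abs_of_nonpos]
      · field_simp; ring
      · rw [sub_nonpos, le_div_iff₀ hN0]; nlinarith
    have habs2 : |1/2 - ((n:ℝ) - 1)/n| = ((n:ℝ) - 2)/(2*n) := by
      rw [abs_of_nonpos]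
      · field_simp; ring
      · rw [sub_nonpos, le_div_iff₀ hN0]; nlinarith
    rw [habs1, habs2] at key
    have key2 : p * ((n:ℝ) - 1) + (1 - p) * ((n:ℝ) - 1)
        ≤ p * ((n:ℝ) - 2) + (1 - p) * (n:ℝ) := by
      have e1 : p * (((n:ℝ) - 1)/(2*n)) + (1 - p)/n * (((n:ℝ) - 1)/2)
          = (p * ((n:ℝ) - 1) + (1 - p) * ((n:ℝ) - 1)) / (2*n) := by
        field_simp
      have e2 : p * (((n:ℝ) - 2)/(2*n)) + (1 - p)/n * ((n:ℝ)/2)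
          = (p * ((n:ℝ) - 2) + (1 - p) * (n:ℝ)) / (2*n) := by
        field_simp
      rw [e1, e2] at key
      exact (div_le_div_iff_of_pos_right (by linarith)).mp key
    nlinarith
  · intro hp x i x' hx hx'
    have hs : ∑ j, Function.update x i x' j = ∑ j, x j - x i + x' := by
      have := sum_update_eq n id x i x'
      simpa using this
    set A := (∑ j, x j) / (n:ℝ) with hA
    set A' := (∑ j, Function.update x i x' j) / (n:ℝ) with hA'
    set d := |x i - x'| with hd
    have hd0 : 0 ≤ d := abs_nonneg _
    have hAA' : |A - A'| = d / n := by
      rw [hA, hA', hs, hd, show (∑ j, x j)/(n:ℝ) - (∑ j, x j - x i + x')/(n:ℝ)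
        = (x i - x')/(n:ℝ) by field_simp; ring, abs_div, abs_of_pos hN0]
    have htri : |x i - A| ≤ |x i - A'| + d / n := by
      have h := abs_sub_le (x i - A) (x i - A') 0  -- not needed
      have : |x i - A| ≤ |x i - A'| + |A' - A| := by
        calc |x i - A| = |(x i - A') + (A' - A)| := by ring_nf
          _ ≤ |x i - A'| + |A' - A| := abs_add_le _ _
      rwa [abs_sub_comm A' A, hAA'] at this
    have hR1 : ∑ k ∈ Finset.Icc 1 n, |x i - rankK n k x| = ∑ j, |x i - x j| :=
      sum_rank n (x i) x
    have hR2 : ∑ k ∈ Finset.Icc 1 n, |x i - rankK n k (Function.update x i x')|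
        = ∑ j, |x i - x j| + d := by
      rw [sum_rank, sum_update_eq n (fun t => |x i - t|) x i x']
      simp [hd]
    rw [hR1, hR2]
    have h3 : p * (d / n) ≤ ((1 - p) / n) * d := by
      rw [show p * (d/n) = (p * d)/n by ring, show ((1-p)/n) * d = ((1-p)*d)/n by ring]
      exact (div_le_div_iff_of_pos_right hN0).mpr
        (mul_le_mul_of_nonneg_right (by linarith) hd0)
    have h4 := mul_le_mul_of_nonneg_left htri hp0
    rw [mul_add] at h4
    rw [mul_add ((1 - p) / (n:ℝ))]
    linarith
end

section
/- Random Rank satisfies Strong Proportional Fairness in expectation: for any profile x ∈ [0,1]^n contained in an interval of length R, and any subset S of agents whose locations lie in an interval of length r, for every i ∈ S: (1/n)·Σ_{k=1}^n |x_i − rank^k(x)| ≤ R·(n−|S|)/n + r. -/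
lemma sum_map_eq (l : List ℝ) (F : ℝ → ℝ) :
    (l.map F).sum = ∑ m ∈ Finset.range l.length, F (l.getD m 0) := by
  induction l with
  | nil => simp
  | cons a t ih => simp [Finset.sum_range_succ', ih, List.getD, add_comm]

/-- Random Rank satisfies Strong Proportional Fairness in
expectation: if the whole profile lies within range R and the agents of S lie
within range r, then each agent of S has expected cost at most R(n−|S|)/n + r. -/
theorem randomRank_strong_proportional_fairness (n : ℕ) (hn : 1 ≤ n)
    (x : Fin n → ℝ) (hx : ∀ i, x i ∈ Set.Icc (0:ℝ) 1)
    (R r : ℝ) (hR : ∀ i j, |x i - x j| ≤ R)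
    (S : Finset (Fin n)) (hr : ∀ i ∈ S, ∀ j ∈ S, |x i - x j| ≤ r) :
    ∀ i ∈ S, (1 / (n : ℝ)) * ∑ k ∈ Finset.Icc 1 n, |x i - rankK n k x| ≤
      R * (((n : ℝ) - S.card) / n) + r := by
  intro i hi
  set L := (List.ofFn x).insertionSort (· ≥ ·) with hL
  have hlen : L.length = n := by simp [hL]
  set F : ℝ → ℝ := fun v => |x i - v| with hF
  -- rewrite sum over Icc as sum over range
  have h1 : ∑ k ∈ Finset.Icc 1 n, |x i - rankK n k x|
      = ∑ m ∈ Finset.range n, F (L.getD m 0) := by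
    rw [show Finset.Icc 1 n = Finset.Ico 1 (n+1) by ext a; simp [Nat.lt_succ_iff]]
    rw [Finset.sum_Ico_eq_sum_range]
    simp only [Nat.add_sub_cancel]
    refine Finset.sum_congr rfl fun m _ => ?_
    simp [rankK, hL, hF, Nat.add_sub_cancel, add_comm 1 m]
  have h2 : ∑ m ∈ Finset.range n, F (L.getD m 0) = (L.map F).sum := by
    rw [sum_map_eq, hlen]
  have hperm : L.Perm (List.ofFn x) := List.perm_insertionSort _ _
  have h3 : (L.map F).sum = ∑ j, F (x j) := by
    rw [(hperm.map F).sum_eq, List.map_ofFn, List.sum_ofFn]; rfl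
  have hr0 : 0 ≤ r := le_trans (abs_nonneg _) (hr i hi i hi)
  have hR0 : 0 ≤ R := le_trans (abs_nonneg _) (hR i i)
  have hcard : (S.card : ℝ) ≤ n := by
    exact_mod_cast Finset.card_le_card (Finset.subset_univ S) |>.trans_eq (by simp)
  have hn0 : (0:ℝ) < n := by exact_mod_cast hn
  have hsplit : ∑ j, F (x j) ≤ S.card * r + ((n:ℝ) - S.card) * R := by
    rw [← Finset.sum_add_sum_compl S]
    have hS : ∑ j ∈ S, F (x j) ≤ S.card * r := by
      rw [← nsmul_eq_mul]
      exact Finset.sum_le_card_nsmul _ _ _ fun j hj => hr i hi j hj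
    have hSc : ∑ j ∈ Sᶜ, F (x j) ≤ ((n:ℝ) - S.card) * R := by
      have : ∑ j ∈ Sᶜ, F (x j) ≤ Sᶜ.card • R :=
        Finset.sum_le_card_nsmul _ _ _ fun j _ => hR i j
      rw [nsmul_eq_mul] at this
      refine this.trans_eq ?_
      congr 1
      rw [Finset.card_compl]
      push_cast [Finset.card_le_univ S]
      simp
    linarith
  have key : ∑ k ∈ Finset.Icc 1 n, |x i - rankK n k x| ≤ S.card * r + ((n:ℝ) - S.card) * R := by
    rw [h1, h2, h3]; exact hsplit
  have h4 : (1 / (n:ℝ)) * (S.card * r + ((n:ℝ) - S.card) * R) ≤ R * (((n:ℝ) - S.card) / n) + r := by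
    rw [div_mul_eq_mul_div, one_mul, ← mul_div_assoc, div_add' _ _ _ hn0.ne',
      div_le_div_iff₀ hn0 hn0]
    nlinarith [mul_nonneg (mul_nonneg hr0 (sub_nonneg.2 hcard)) hn0.le]
  calc (1 / (n:ℝ)) * ∑ k ∈ Finset.Icc 1 n, |x i - rankK n k x|
      ≤ (1 / (n:ℝ)) * (S.card * r + ((n:ℝ) - S.card) * R) := by
        apply mul_le_mul_of_nonneg_left key (by positivity)
    _ ≤ _ := h4
end
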